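/- If D is a completely integrally closed domain, then for every ideal I of D with I_v a proper ideal of D, the intersection over all n ≥ 1 of (I^n)_v is the zero ideal. -/

import Mathlib

open scoped nonZeroDivisors

/-- `D` is completely integrally closed (w.r.t. a quotient field `K`). -/
def IsCompletelyIntegrallyClosed (D : Type*) [CommRing D] [IsDomain D]
    (K : Type*) [Field K] [Algebra D K] [IsFractionRing D K] : Prop :=
  ∀ x : K,
    (∃ r : D, r ≠ 0 ∧ ∀ n : ℕ, 1 ≤ n →
      ∃ d : D, algebraMap D K d = algebraMap D K r * x ^ n) →
    ∃ d : D, algebraMap D K d = x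

lemma pow_le_one_aux {R P : Type*} [CommRing R] {S : Submonoid R} [CommRing P] [Algebra R P]
    [loc : IsLocalization S P] {X : FractionalIdeal S P} (h : X ≤ 1) :
    ∀ n : ℕ, X ^ n ≤ 1 := by
  intro n
  induction n with
  | zero => simp
  | succ k ih =>
    rw [pow_succ]
    refine FractionalIdeal.mul_le.mpr fun i hi j hj => ?_
    obtain ⟨i', hi'⟩ := (FractionalIdeal.mem_one_iff S).mp (ih hi)
    obtain ⟨j', hj'⟩ := (FractionalIdeal.mem_one_iff S).mp (h hj)
    exact (FractionalIdeal.mem_one_iff S).mpr ⟨i' * j', by rw [map_mul, hi', hj']⟩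

/-- If `D` is completely integrally closed, then for every ideal `I` of `D` with
`I_v` a proper ideal of `D`, `⋂_{n ≥ 1} (I^n)_v = (0)`. -/
theorem stmt_4 (D : Type*) [CommRing D] [IsDomain D]
    (K : Type*) [Field K] [Algebra D K] [IsFractionRing D K]
    (hD : IsCompletelyIntegrallyClosed D K)
    (I : Ideal D)
    (hIv : ((I : FractionalIdeal D⁰ K)⁻¹)⁻¹ ≠ 1) :
    (⨅ (n : ℕ) (_ : 1 ≤ n),
      (((((I : FractionalIdeal D⁰ K) ^ n)⁻¹)⁻¹ : FractionalIdeal D⁰ K) : Submodule D K)) = ⊥ := by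
  set J : FractionalIdeal D⁰ K := (I : FractionalIdeal D⁰ K) with hJdef
  rw [eq_bot_iff]
  intro x hx
  simp only [Submodule.mem_iInf] at hx
  rw [Submodule.mem_bot]
  by_contra hx0
  by_cases hI0 : I = ⊥
  · have h1 := hx 1 le_rfl
    rw [show J = 0 by rw [hJdef, hI0, FractionalIdeal.coeIdeal_bot]] at h1
    simp only [pow_one, FractionalIdeal.inv_zero', FractionalIdeal.coe_zero,
      Submodule.mem_bot] at h1
    exact hx0 h1
  have hJ0 : J ≠ 0 := FractionalIdeal.coeIdeal_ne_zero.mpr hI0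
  have hJ1 : J ≤ 1 := FractionalIdeal.coeIdeal_le_one
  have hJn0 : ∀ n : ℕ, J ^ n ≠ 0 := fun n => by
    rw [hJdef, ← FractionalIdeal.coeIdeal_pow]
    exact FractionalIdeal.coeIdeal_ne_zero.mpr (pow_ne_zero n hI0)
  have hJn1 : ∀ n : ℕ, J ^ n ≤ 1 := pow_le_one_aux hJ1
  have hinv_one_le : ∀ n : ℕ, (1 : FractionalIdeal D⁰ K) ≤ (J ^ n)⁻¹ := fun n => by
    rw [FractionalIdeal.inv_eq, FractionalIdeal.le_div_iff_mul_le (hJn0 n), one_mul]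
    exact hJn1 n
  have hinv_ne : ∀ n : ℕ, (J ^ n)⁻¹ ≠ 0 := fun n h0 => by
    have h10 : (1 : FractionalIdeal D⁰ K) = 0 := le_antisymm (h0 ▸ hinv_one_le n) (FractionalIdeal.zero_le _)
    have h1 : (1 : K) ∈ (1 : FractionalIdeal D⁰ K) := FractionalIdeal.one_mem_one D⁰
    rw [h10, FractionalIdeal.mem_zero_iff] at h1
    exact one_ne_zero h1
  -- numerator and denominator of x
  obtain ⟨a, b, hb, hab⟩ := IsFractionRing.div_surjective (A := D) x
  have hbK : algebraMap D K b ≠ 0 := by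
    simpa using (IsFractionRing.to_map_eq_zero_iff (K := K)).not.mpr
      (nonZeroDivisors.ne_zero hb)
  have hax : algebraMap D K a = x * algebraMap D K b := by
    field_simp at hab
    rw [hab, mul_comm]
  have ha0 : a ≠ 0 := by
    intro h
    rw [h, map_zero] at hax
    rcases mul_eq_zero.mp hax.symm with h' | h'
    · exact hx0 h'
    · exact hbK h'
  -- the key claim: J⁻¹ ≤ 1
  have key : J⁻¹ ≤ 1 := by
    intro u hu
    have hone : FractionalIdeal.spanSingleton D⁰ u * J ≤ 1 :=
      (FractionalIdeal.le_div_iff_mul_le hJ0).mp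
        (by rwa [← FractionalIdeal.inv_eq, FractionalIdeal.spanSingleton_le_iff_mem])
    have hun : ∀ n : ℕ, u ^ n ∈ (J ^ n)⁻¹ := by
      intro n
      rw [← FractionalIdeal.spanSingleton_le_iff_mem, FractionalIdeal.inv_eq,
        FractionalIdeal.le_div_iff_mul_le (hJn0 n), ← FractionalIdeal.spanSingleton_pow,
        ← mul_pow]
      exact pow_le_one_aux hone n
    refine (FractionalIdeal.mem_one_iff D⁰).mpr (hD u ⟨a, ha0, fun n hn => ?_⟩)
    have h2 : x ∈ ((J ^ n)⁻¹)⁻¹ := by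
      have := hx n hn
      rwa [FractionalIdeal.mem_coe] at this
    have h3 : x * u ^ n ∈ (1 : FractionalIdeal D⁰ K) :=
      (FractionalIdeal.mem_inv_iff (hinv_ne n)).mp h2 (u ^ n) (hun n)
    obtain ⟨d, hd⟩ := (FractionalIdeal.mem_one_iff D⁰).mp h3
    refine ⟨b * d, ?_⟩
    rw [map_mul, hd, hax]
    ring
  have hone_le : (1 : FractionalIdeal D⁰ K) ≤ J⁻¹ := by
    rw [FractionalIdeal.inv_eq, FractionalIdeal.le_div_iff_mul_le hJ0, one_mul]
    exact hJ1
  have hinv : J⁻¹ = 1 := le_antisymm key hone_le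
  apply hIv
  rw [hinv, FractionalIdeal.inv_eq, FractionalIdeal.div_one]
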